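/- Let λ = (λ_1,…,λ_k) be a partition with λ_{k+1} := 0, and let D(λ) be the twisted-diagram digraph: vertices are lattice points (t, r) ∈ ℤ×{0,…,k}; for each row i ∈ {1,…,k} there are east edges (t, i−1)→(t+1, i−1) for 0 ≤ t ≤ λ_i − 1, east edges (t, i)→(t+1, i) for 1 ≤ t ≤ λ_i, and southeast edges (t, i−1)→(t+1, i) for 0 ≤ t ≤ λ_i; the southeast edge (0, i−1)→(1, i) carries weight y, the southeast edge (t, i−1)→(t+1, i) with t > λ_{i+1} carries weight x^{t−λ_{i+1}}, and all other edges carry weight 1. Set e_i = (0, i−1) and v_j = (λ_j+1, j). Then for all 1 ≤ i, j ≤ k, the sum w_{ij} over all directed paths from e_i to v_j of the product of their edge weights equals w_{ij} = C(λ_{j+1}, j−i+1) + y·C(λ_{j+1}, j−i) + Σ_{p=1}^{λ_j − λ_{j+1}} x^p ( C(λ_{j+1}+p−1, j−i) + y·C(λ_{j+1}+p−1, j−i−1) ); in particular w_{ij} = 1 when i = j+1 and w_{ij} = 0 when i > j+1. -/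

import Mathlib

open Finset

/-- `p` is a directed path from `a` to `c` in the digraph with edge relation
`E`, recorded as its (nonempty) list of vertices: consecutive vertices are
joined by edges of the digraph. -/
def IsDiPath {V : Type} (E : V → V → Prop) (a c : V) (p : List V) : Prop :=
  p ≠ [] ∧ p.head? = some a ∧ p.getLast? = some c ∧ p.Chain' E

/-- The 1-based parts `λ_1, …, λ_k` of the partition `lam : Fin k → ℕ`,
extended by `0` outside `{1, …, k}` (so in particular `λ_{k+1} = 0`). -/
def lamE {k : ℕ} (lam : Fin k → ℕ) (t : ℕ) : ℕ :=
  if h : 1 ≤ t ∧ t ≤ k then lam ⟨t - 1, by omega⟩ else 0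

/-- The edge relation of the twisted-diagram digraph `D(λ)`.  Vertices are the
lattice points `(t, r) ∈ ℤ × ℤ` (only `r ∈ {0, …, k}` occurs in any edge); for
each row `i ∈ {1, …, k}` there are east edges `(t, i-1) → (t+1, i-1)` for
`0 ≤ t ≤ λ_i - 1`, east edges `(t, i) → (t+1, i)` for `1 ≤ t ≤ λ_i`, and
southeast edges `(t, i-1) → (t+1, i)` for `0 ≤ t ≤ λ_i`. -/
def twistE {k : ℕ} (lam : Fin k → ℕ) : ℤ × ℤ → ℤ × ℤ → Prop := fun a c =>
  ∃ i : ℕ, 1 ≤ i ∧ i ≤ k ∧ c.1 = a.1 + 1 ∧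
    ((a.2 = (i : ℤ) - 1 ∧ c.2 = (i : ℤ) - 1 ∧ 0 ≤ a.1 ∧ a.1 ≤ (lamE lam i : ℤ) - 1) ∨
     (a.2 = (i : ℤ) ∧ c.2 = (i : ℤ) ∧ 1 ≤ a.1 ∧ a.1 ≤ (lamE lam i : ℤ)) ∨
     (a.2 = (i : ℤ) - 1 ∧ c.2 = (i : ℤ) ∧ 0 ≤ a.1 ∧ a.1 ≤ (lamE lam i : ℤ)))

/-- Binomial coefficient `C(a, b)` with integer lower argument; it is `0` when
`b < 0` or `b > a`. -/
def chooseZ (a : ℕ) (b : ℤ) : ℕ := if 0 ≤ b then a.choose b.toNat else 0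

/-- The edge weights of the twisted-diagram digraph `D(λ)`: the southeast edge
`(0, i-1) → (1, i)` has weight `y`, a southeast edge `(t, i-1) → (t+1, i)` with
`t > λ_{i+1}` has weight `x^{t - λ_{i+1}}`, and every other edge has weight
`1`.  (For a southeast edge into the row `r = c.2 = i`, the relevant part is
`λ_{i+1} = lamE lam (i+1)`.) -/
def twistW {R : Type} [CommRing R] (x y : R) {k : ℕ} (lam : Fin k → ℕ) :
    ℤ × ℤ → ℤ × ℤ → R := fun a c =>
  if c.2 = a.2 + 1 then
    if a.1 = 0 then y
    else if (lamE lam (c.2.toNat + 1) : ℤ) < a.1 then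
      x ^ (a.1 - (lamE lam (c.2.toNat + 1) : ℤ)).toNat
    else 1
  else 1

/-- The weight of a directed path: the product of the weights `w` of its
edges (the pairs of consecutive vertices). -/
def pathWeight {V R : Type} [CommRing R] (w : V → V → R) (p : List V) : R :=
  ((p.zip p.tail).map fun q => w q.1 q.2).prod

/-- `twistSum x y lam i j` is `w_{ij}`: the sum, over all directed paths in the
twisted-diagram digraph `D(λ)` from `e_i = (0, i-1)` to `v_j = (λ_j + 1, j)`,
of the product of the edge weights of the path.  (Here `i j : Fin k` are
0-based, so `e_i = (0, (i : ℕ))` and `v_j = (λ_j + 1, (j : ℕ) + 1)`.) -/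
noncomputable def twistSum {R : Type} [CommRing R] (x y : R) {k : ℕ} (lam : Fin k → ℕ)
    (i j : Fin k) : R :=
  ∑ᶠ p ∈ {p : List (ℤ × ℤ) |
      IsDiPath (twistE lam) ((0 : ℤ), ((i : ℕ) : ℤ)) ((lam j : ℤ) + 1, ((j : ℕ) : ℤ) + 1) p},
    pathWeight (twistW x y lam) p

namespace Stmt11Aux

open Finset

variable {R : Type} [CommRing R] {k : ℕ}

/-! ### Basic facts about `lamE` -/

lemma lamE_anti {lam : Fin k → ℕ} (hlam : ∀ i j : Fin k, i ≤ j → lam j ≤ lam i)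
    {a b : ℕ} (ha : 1 ≤ a) (hab : a ≤ b) : lamE lam b ≤ lamE lam a := by
  unfold lamE
  by_cases hb : 1 ≤ b ∧ b ≤ k
  · rw [dif_pos hb, dif_pos (⟨ha, le_trans hab hb.2⟩ : 1 ≤ a ∧ a ≤ k)]
    exact hlam _ _ (by simp only [Fin.mk_le_mk]; omega)
  · rw [dif_neg hb]; exact Nat.zero_le _

lemma lamE_pos {lam : Fin k → ℕ} (hpos : ∀ i, 0 < lam i) {a : ℕ}
    (ha : 1 ≤ a) (hak : a ≤ k) : 0 < lamE lam a := by
  unfold lamE; rw [dif_pos ⟨ha, hak⟩]; exact hpos _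

lemma lamE_coe {lam : Fin k → ℕ} (j : Fin k) : lamE lam ((j : ℕ) + 1) = lam j := by
  have hj := j.isLt
  unfold lamE
  rw [dif_pos (by omega : 1 ≤ (j : ℕ) + 1 ∧ (j : ℕ) + 1 ≤ k)]
  congr 1

/-! ### The height function of a set of southeast-step columns -/

def hfun (i0 : ℕ) (s : Finset ℕ) (t : ℕ) : ℕ := i0 + (s.filter (· < t)).card

lemma hfun_zero (i0 : ℕ) (s : Finset ℕ) : hfun i0 s 0 = i0 := by simp [hfun]

lemma filter_lt_succ (s : Finset ℕ) (t : ℕ) :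
    s.filter (· < t + 1) = if t ∈ s then insert t (s.filter (· < t)) else s.filter (· < t) := by
  ext u
  by_cases h : t ∈ s <;>
    simp only [h, if_true, if_false, Finset.mem_filter, Finset.mem_insert]
  · constructor
    · rintro ⟨hu, hlt⟩
      by_cases hut : u = t
      · exact Or.inl hut
      · exact Or.inr ⟨hu, by omega⟩
    · rintro (rfl | ⟨hu, hlt⟩)
      · exact ⟨h, by omega⟩
      · exact ⟨hu, by omega⟩
  · constructor
    · rintro ⟨hu, hlt⟩
      refine ⟨hu, ?_⟩
      rcases Nat.lt_succ_iff_lt_or_eq.mp hlt with h' | h'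
      · exact h'
      · exact absurd (h' ▸ hu) h
    · rintro ⟨hu, hlt⟩; exact ⟨hu, by omega⟩

lemma hfun_succ (i0 : ℕ) (s : Finset ℕ) (t : ℕ) :
    hfun i0 s (t + 1) = hfun i0 s t + (if t ∈ s then 1 else 0) := by
  unfold hfun
  rw [filter_lt_succ]
  split_ifs with h
  · rw [Finset.card_insert_of_notMem (by simp)]; omega
  · simp

lemma hfun_le (i0 : ℕ) (s : Finset ℕ) (t : ℕ) : hfun i0 s t ≤ i0 + s.card :=
  Nat.add_le_add_left (Finset.card_le_card (Finset.filter_subset _ _)) _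

lemma hfun_total {i0 m t : ℕ} {s : Finset ℕ} (hs : s ⊆ Finset.range m) (hm : m ≤ t) :
    hfun i0 s t = i0 + s.card := by
  unfold hfun
  congr 2
  exact Finset.filter_true_of_mem fun u hu =>
    lt_of_lt_of_le (Finset.mem_range.mp (hs hu)) hm

lemma rank_le_of_mem {s : Finset ℕ} {t : ℕ} (ht : t ∈ s) :
    (s.filter (· < t)).card + 1 ≤ s.card := by
  have hsub : insert t (s.filter (· < t)) ⊆ s := by
    intro u hu
    rcases Finset.mem_insert.mp hu with rfl | hu
    · exact ht
    · exact (Finset.mem_filter.mp hu).1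
  have h2 := Finset.card_le_card hsub
  rwa [Finset.card_insert_of_notMem (by simp)] at h2

lemma rank_le_of_mem_two {s : Finset ℕ} {t T : ℕ} (ht : t ∈ s) (hT : T ∈ s) (hlt : t < T) :
    (s.filter (· < t)).card + 2 ≤ s.card := by
  have hsub : insert T (insert t (s.filter (· < t))) ⊆ s := by
    intro u hu
    rcases Finset.mem_insert.mp hu with rfl | hu
    · exact hT
    rcases Finset.mem_insert.mp hu with rfl | hu
    · exact ht
    · exact (Finset.mem_filter.mp hu).1
  have h2 := Finset.card_le_card hsub
  rwa [Finset.card_insert_of_notMem (by simp; omega),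
    Finset.card_insert_of_notMem (by simp)] at h2

lemma filter_lt_max' {s : Finset ℕ} (hs : s.Nonempty) :
    s.filter (· < s.max' hs) = s.erase (s.max' hs) := by
  ext u
  simp only [Finset.mem_filter, Finset.mem_erase]
  constructor
  · rintro ⟨hu, hlt⟩; exact ⟨Nat.ne_of_lt hlt, hu⟩
  · rintro ⟨hne, hu⟩; exact ⟨hu, lt_of_le_of_ne (s.le_max' u hu) hne⟩

/-! ### The path associated to a set of southeast-step columns -/

def pOf (i0 L : ℕ) (s : Finset ℕ) : List (ℤ × ℤ) :=
  (List.range L).map fun t : ℕ => ((t : ℤ), (hfun i0 s t : ℤ))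

lemma pOf_length (i0 L : ℕ) (s : Finset ℕ) : (pOf i0 L s).length = L := by simp [pOf]

lemma pOf_get (i0 L : ℕ) (s : Finset ℕ) (m : ℕ) (hm : m < (pOf i0 L s).length) :
    (pOf i0 L s).get ⟨m, hm⟩ = ((m : ℤ), (hfun i0 s m : ℤ)) := by
  simp [pOf]

end Stmt11Aux
namespace Stmt11Aux
open Finset
variable {R : Type} [CommRing R] {k : ℕ}

lemma twistE_mk {lam : Fin k → ℕ} {t1 h1 t2 h2 : ℤ} :
    twistE lam (t1, h1) (t2, h2) ↔ ∃ i : ℕ, 1 ≤ i ∧ i ≤ k ∧ t2 = t1 + 1 ∧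
      ((h1 = (i : ℤ) - 1 ∧ h2 = (i : ℤ) - 1 ∧ 0 ≤ t1 ∧ t1 ≤ (lamE lam i : ℤ) - 1) ∨
       (h1 = (i : ℤ) ∧ h2 = (i : ℤ) ∧ 1 ≤ t1 ∧ t1 ≤ (lamE lam i : ℤ)) ∨
       (h1 = (i : ℤ) - 1 ∧ h2 = (i : ℤ) ∧ 0 ≤ t1 ∧ t1 ≤ (lamE lam i : ℤ))) :=
  Iff.rfl

lemma pOf_isDiPath {lam : Fin k → ℕ}
    (hlam : ∀ i j : Fin k, i ≤ j → lam j ≤ lam i) (hpos : ∀ i, 0 < lam i)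
    {i j : Fin k} (hij : (i : ℕ) ≤ (j : ℕ) + 1) {s : Finset ℕ}
    (hsub : s ⊆ Finset.range (lam j + 1)) (hcard : s.card = (j : ℕ) + 1 - (i : ℕ)) :
    IsDiPath (twistE lam) ((0 : ℤ), ((i : ℕ) : ℤ)) ((lam j : ℤ) + 1, ((j : ℕ) : ℤ) + 1)
      (pOf (i : ℕ) (lam j + 2) s) := by
  have hk := j.isLt
  have hik := i.isLt
  have hjlam : lamE lam ((j : ℕ) + 1) = lam j := lamE_coe j
  have h2 : lam j + 2 = (lam j + 1) + 1 := rfl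
  refine ⟨by simp [pOf], ?_, ?_, ?_⟩
  · -- head
    rw [pOf, h2, List.range_succ_eq_map, List.map_cons, List.head?_cons, hfun_zero]
    norm_num
  · -- last
    rw [pOf, h2, List.range_succ, List.map_append, List.map_singleton, List.getLast?_concat,
      hfun_total hsub le_rfl]
    simp only [Option.some.injEq, Prod.mk.injEq]
    constructor
    · push_cast; ring
    · push_cast; omega
  · -- chain
    rw [pOf, List.Chain', List.isChain_map, h2, List.isChain_range_succ]
    intro m hm
    simp only [Nat.succ_eq_add_one]
    refine twistE_mk.mpr ?_
    have hform : hfun (i : ℕ) s m = (i : ℕ) + (s.filter (· < m)).card := rfl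
    have hstep := hfun_succ (i : ℕ) s m
    have hle := hfun_le (i : ℕ) s m
    have hmlam : m ≤ lam j := by omega
    by_cases hms : m ∈ s
    · -- southeast edge, row hfun+1
      have hrank := rank_le_of_mem hms
      have h3 : lamE lam ((j : ℕ) + 1) ≤ lamE lam (hfun (i : ℕ) s m + 1) :=
        lamE_anti hlam (by omega) (by omega)
      refine ⟨hfun (i : ℕ) s m + 1, by omega, by omega, by omega,
        Or.inr (Or.inr ⟨by omega, ?_, by omega, by omega⟩)⟩
      rw [hstep, if_pos hms]
    · have hstep1 : hfun (i : ℕ) s (m + 1) = hfun (i : ℕ) s m := by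
        rw [hstep, if_neg hms]; omega
      rcases Nat.eq_zero_or_pos m with rfl | hm1
      · -- m = 0 : east edge in row i+1
        have h0 : hfun (i : ℕ) s 0 = (i : ℕ) := hfun_zero _ _
        have hlpos : 0 < lamE lam ((i : ℕ) + 1) := lamE_pos hpos (by omega) (by omega)
        exact ⟨(i : ℕ) + 1, by omega, by omega, by omega,
          Or.inl ⟨by omega, by omega, by omega, by omega⟩⟩
      · rcases Nat.eq_zero_or_pos (hfun (i : ℕ) s m) with hh0 | hh1
        · -- height 0, east edge in row 1
          have hr0 : (s.filter (· < m)).card = 0 := by omega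
          have hsne : s.Nonempty := by
            rw [← Finset.card_pos, hcard]; omega
          obtain ⟨u, hu⟩ := hsne
          have hum : ¬ u < m := by
            intro h
            have : u ∈ s.filter (· < m) := Finset.mem_filter.mpr ⟨hu, h⟩
            rw [Finset.card_eq_zero.mp hr0] at this
            exact absurd this (Finset.notMem_empty u)
          have hune : u ≠ m := fun h => hms (h ▸ hu)
          have hule : u < lam j + 1 := Finset.mem_range.mp (hsub hu)
          have h3 : lamE lam ((j : ℕ) + 1) ≤ lamE lam 1 := lamE_anti hlam le_rfl (by omega)
          exact ⟨1, le_rfl, by omega, by omega,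
            Or.inl ⟨by omega, by omega, by omega, by omega⟩⟩
        · -- east edge in row hfun
          have h3 : lamE lam ((j : ℕ) + 1) ≤ lamE lam (hfun (i : ℕ) s m) :=
            lamE_anti hlam (by omega) (by omega)
          exact ⟨hfun (i : ℕ) s m, by omega, by omega, by omega,
            Or.inr (Or.inl ⟨by omega, by omega, by omega, by omega⟩)⟩

end Stmt11Aux
namespace Stmt11Aux
open Finset
variable {k : ℕ}

lemma twistE_step {lam : Fin k → ℕ} {a c : ℤ × ℤ} (h : twistE lam a c) :
    c.1 = a.1 + 1 ∧ (c.2 = a.2 ∨ c.2 = a.2 + 1) := by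
  obtain ⟨i', _, _, hc1, hor⟩ := h
  refine ⟨hc1, ?_⟩
  rcases hor with ⟨h1, h2, _⟩ | ⟨h1, h2, _⟩ | ⟨h1, h2, _⟩ <;> omega

lemma pOf_getD (i0 L : ℕ) (s : Finset ℕ) (m : ℕ) (hm : m < L) :
    (pOf i0 L s).getD m ((0 : ℤ), (0 : ℤ)) = ((m : ℤ), (hfun i0 s m : ℤ)) := by
  rw [List.getD_eq_getElem _ _ (by rw [pOf_length]; omega)]
  simp [pOf]

lemma recon {lam : Fin k → ℕ} {p : List (ℤ × ℤ)} {i0 : ℕ} {c : ℤ × ℤ}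
    (hp : IsDiPath (twistE lam) ((0 : ℤ), (i0 : ℤ)) c p) :
    ∃ s : Finset ℕ, s ⊆ Finset.range (p.length - 1) ∧ p = pOf i0 p.length s ∧
      c = (((p.length : ℤ) - 1), (i0 : ℤ) + s.card) := by
  obtain ⟨hne, hhead, hlast, hchain⟩ := hp
  set L := p.length with hL
  have hL1 : 1 ≤ L := List.length_pos_iff.mpr hne
  have hE : ∀ m, m < L - 1 →
      twistE lam (p.getD m (0, 0)) (p.getD (m + 1) (0, 0)) := by
    intro m hm
    have h := List.isChain_iff_getElem.mp hchain m (by omega)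
    rwa [← List.getD_eq_getElem p (0, 0) (by omega), ← List.getD_eq_getElem p (0, 0) (by omega)] at h
  have h0 : p.getD 0 (0, 0) = ((0 : ℤ), (i0 : ℤ)) := by
    cases p with
    | nil => simp at hne
    | cons a l => simpa using hhead
  have hcol : ∀ m, m < L → (p.getD m (0, 0)).1 = (m : ℤ) := by
    intro m
    induction m with
    | zero => intro _; rw [h0]; simp
    | succ m ih =>
      intro hm
      have h := (twistE_step (hE m (by omega))).1
      rw [h, ih (by omega)]
      push_cast; ring
  classical
  set s : Finset ℕ := (Finset.range (L - 1)).filter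
    (fun t => (p.getD (t + 1) (0, 0)).2 = (p.getD t (0, 0)).2 + 1) with hs
  have hsub : s ⊆ Finset.range (L - 1) := Finset.filter_subset _ _
  have hstep2 : ∀ m, m < L - 1 → (p.getD (m + 1) (0, 0)).2 =
      (p.getD m (0, 0)).2 + (if m ∈ s then 1 else 0) := by
    intro m hm
    by_cases hm' : m ∈ s
    · rw [if_pos hm']
      exact (Finset.mem_filter.mp hm').2
    · rw [if_neg hm']
      have h := (twistE_step (hE m hm)).2
      rcases h with h | h
      · omega
      · exact absurd (Finset.mem_filter.mpr ⟨Finset.mem_range.mpr hm, h⟩) hm'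
  have hht : ∀ m, m < L →
      (p.getD m (0, 0)).2 = (i0 : ℤ) + ((s.filter (· < m)).card : ℤ) := by
    intro m
    induction m with
    | zero =>
      intro _
      rw [h0]
      simp
    | succ m ih =>
      intro hm
      rw [hstep2 m (by omega), ih (by omega), filter_lt_succ]
      split_ifs with h
      · rw [Finset.card_insert_of_notMem (by simp)]
        push_cast; ring
      · ring
  have hpeq : p = pOf i0 L s := by
    apply List.ext_get (by rw [pOf_length])
    intro m h1 h2
    rw [pOf_get]
    simp only [List.get_eq_getElem]
    rw [← List.getD_eq_getElem p (0, 0) h1]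
    have hc := hcol m h1
    have hh := hht m h1
    have hfm : (hfun i0 s m : ℤ) = (i0 : ℤ) + ((s.filter (· < m)).card : ℤ) := by
      rw [hfun]; push_cast; ring
    refine Prod.ext hc ?_
    rw [hh, hfm]
  refine ⟨s, hsub, hpeq, ?_⟩
  have hcL : c = p.getD (L - 1) (0, 0) := by
    have h1 := List.getLast?_eq_getLast_of_ne_nil hne
    rw [h1, Option.some_inj] at hlast
    rw [← hlast, List.getLast_eq_getElem, ← List.getD_eq_getElem p (0, 0)]
  have hfil : s.filter (· < L - 1) = s := by
    apply Finset.filter_true_of_mem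
    intro u hu
    exact Finset.mem_range.mp (hsub hu)
  refine hcL.trans (Prod.ext ?_ ?_)
  · rw [hcol (L - 1) (by omega)]
    push_cast [Nat.cast_sub hL1]
    ring
  · rw [hht (L - 1) (by omega), hfil]

lemma pOf_inj {i0 L : ℕ} {s s' : Finset ℕ} (hs : s ⊆ Finset.range (L - 1))
    (hs' : s' ⊆ Finset.range (L - 1)) (hL : 1 ≤ L) (h : pOf i0 L s = pOf i0 L s') : s = s' := by
  have hf : ∀ m, m < L → hfun i0 s m = hfun i0 s' m := by
    intro m hm
    have h3 := congrArg (fun l : List (ℤ × ℤ) => l.getD m ((0 : ℤ), (0 : ℤ))) h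
    rw [pOf_getD i0 L s m hm, pOf_getD i0 L s' m hm] at h3
    simp only [Prod.mk.injEq, Nat.cast_inj] at h3
    exact h3.2
  have key : ∀ a b : Finset ℕ, a ⊆ Finset.range (L - 1) →
      (∀ m, m < L → hfun i0 a m = hfun i0 b m) → ∀ t, t ∈ a → t ∈ b := by
    intro a b ha hab t hta
    have ht1 : t < L - 1 := Finset.mem_range.mp (ha hta)
    have e1 := hfun_succ i0 a t
    have e2 := hfun_succ i0 b t
    rw [if_pos hta] at e1
    have h1 := hab t (by omega)
    have h2 := hab (t + 1) (by omega)
    by_contra htb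
    rw [if_neg htb] at e2
    omega
  ext t
  exact ⟨key s s' hs hf t, key s' s hs' (fun m hm => (hf m hm).symm) t⟩

end Stmt11Aux
namespace Stmt11Aux
open Finset
variable {R : Type} [CommRing R] {k : ℕ}

lemma pathWeight_cons_cons (w : ℤ × ℤ → ℤ × ℤ → R) (a b : ℤ × ℤ) (l : List (ℤ × ℤ)) :
    pathWeight w (a :: b :: l) = w a b * pathWeight w (b :: l) := by
  simp [pathWeight]

lemma pathWeight_map_range' (w : ℤ × ℤ → ℤ × ℤ → R) (g : ℕ → ℤ × ℤ) :
    ∀ L c : ℕ, pathWeight w ((List.range' c (L + 1)).map g) =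
      ∏ t ∈ Finset.range L, w (g (c + t)) (g (c + t + 1)) := by
  intro L
  induction L with
  | zero => intro c; simp [pathWeight, List.range']
  | succ m ih =>
    intro c
    have h1 : List.range' c (m + 2) = c :: List.range' (c + 1) (m + 1) :=
      List.range'_succ (s := c) (n := m + 1) (step := 1)
    have h2 : List.range' (c + 1) (m + 1) = (c + 1) :: List.range' (c + 2) m :=
      List.range'_succ (s := c + 1) (n := m) (step := 1)
    rw [h1, List.map_cons, h2, List.map_cons, pathWeight_cons_cons, ← List.map_cons, ← h2,
      ih (c + 1), Finset.prod_range_succ' (fun t => w (g (c + t)) (g (c + t + 1))) m, mul_comm]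
    congr 1 <;> first
      | (refine Finset.prod_congr rfl fun t _ => ?_; congr 2 <;> omega)
      | simp

lemma pathWeight_pOf (w : ℤ × ℤ → ℤ × ℤ → R) (i0 L : ℕ) (s : Finset ℕ) :
    pathWeight w (pOf i0 (L + 1) s) =
      ∏ t ∈ Finset.range L,
        w ((t : ℤ), (hfun i0 s t : ℤ)) (((t : ℤ) + 1, (hfun i0 s (t + 1) : ℤ))) := by
  rw [pOf, List.range_eq_range', pathWeight_map_range']
  refine Finset.prod_congr rfl fun t _ => ?_
  congr 2 <;> push_cast <;> ring

lemma twistW_mk (x y : R) (lam : Fin k → ℕ) (t1 h1 t2 h2 : ℤ) :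
    twistW x y lam (t1, h1) (t2, h2) =
      if h2 = h1 + 1 then
        if t1 = 0 then y
        else if (lamE lam (h2.toNat + 1) : ℤ) < t1 then
          x ^ (t1 - (lamE lam (h2.toNat + 1) : ℤ)).toNat
        else 1
      else 1 := rfl

/-- The weight of the path associated to `s`, with `μ = λ_{j+2}`. -/
noncomputable def W (x y : R) (μ : ℕ) (s : Finset ℕ) : R :=
  if hs : s.Nonempty then
    (if 0 ∈ s then y else 1) * (if μ < s.max' hs then x ^ (s.max' hs - μ) else 1)
  else 1

lemma weight_pOf {lam : Fin k → ℕ}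
    (hlam : ∀ i j : Fin k, i ≤ j → lam j ≤ lam i) (x y : R)
    {i j : Fin k} (hij : (i : ℕ) ≤ (j : ℕ) + 1) {s : Finset ℕ}
    (hsub : s ⊆ Finset.range (lam j + 1)) (hcard : s.card = (j : ℕ) + 1 - (i : ℕ)) :
    pathWeight (twistW x y lam) (pOf (i : ℕ) (lam j + 2) s)
      = W x y (lamE lam ((j : ℕ) + 2)) s := by
  have hk := j.isLt
  have hjlam : lamE lam ((j : ℕ) + 1) = lam j := lamE_coe j
  have h2 : lam j + 2 = (lam j + 1) + 1 := rfl
  rw [h2, pathWeight_pOf]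
  have heast : ∀ t ∈ Finset.range (lam j + 1), t ∉ s →
      twistW x y lam ((t : ℤ), (hfun (i : ℕ) s t : ℤ))
        (((t : ℤ) + 1, (hfun (i : ℕ) s (t + 1) : ℤ))) = 1 := by
    intro t _ hts
    have hstep : hfun (i : ℕ) s (t + 1) = hfun (i : ℕ) s t := by
      rw [hfun_succ, if_neg hts]; omega
    rw [twistW_mk, if_neg (by rw [hstep]; omega)]
  rw [← Finset.prod_subset hsub heast]
  rcases Finset.eq_empty_or_nonempty s with rfl | hsne
  · rw [W, dif_neg (by simp)]
    simp
  · set T := s.max' hsne with hT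
    have hTmem : T ∈ s := s.max'_mem hsne
    have hTrank : (s.filter (· < T)).card = s.card - 1 := by
      rw [filter_lt_max' hsne, Finset.card_erase_of_mem hTmem]
    have hcard1 : 1 ≤ s.card := Finset.card_pos.mpr hsne
    have hhT1 : hfun (i : ℕ) s (T + 1) = (j : ℕ) + 1 := by
      rw [hfun_succ, if_pos hTmem, hfun]
      omega
    rw [← Finset.mul_prod_erase s _ hTmem]
    have herase : ∀ t ∈ s.erase T,
        twistW x y lam ((t : ℤ), (hfun (i : ℕ) s t : ℤ))
          (((t : ℤ) + 1, (hfun (i : ℕ) s (t + 1) : ℤ))) = if t = 0 then y else 1 := by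
      intro t ht
      obtain ⟨htne, hts⟩ := Finset.mem_erase.mp ht
      have htT : t < T := lt_of_le_of_ne (s.le_max' t hts) htne
      have hstep : hfun (i : ℕ) s (t + 1) = hfun (i : ℕ) s t + 1 := by
        rw [hfun_succ, if_pos hts]
      have hrank2 := rank_le_of_mem_two hts hTmem htT
      have hTlam : T < lam j + 1 := Finset.mem_range.mp (hsub hTmem)
      have hmono : lamE lam ((j : ℕ) + 1) ≤ lamE lam (hfun (i : ℕ) s (t + 1) + 1) := by
        apply lamE_anti hlam (by omega)
        have hform : hfun (i : ℕ) s t = (i : ℕ) + (s.filter (· < t)).card := rfl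
        omega
      rw [twistW_mk, if_pos (by rw [hstep]; push_cast; ring)]
      by_cases ht0 : t = 0
      · rw [if_pos (by exact_mod_cast ht0), if_pos ht0]
      · rw [if_neg (by exact_mod_cast ht0), if_neg ht0, if_neg (by rw [Int.toNat_natCast]; omega)]
    rw [Finset.prod_congr rfl herase, Finset.prod_ite_eq' (s.erase T) 0 fun _ => y]
    have hstepT : hfun (i : ℕ) s (T + 1) = hfun (i : ℕ) s T + 1 := by
      rw [hfun_succ, if_pos hTmem]
    have hTw : twistW x y lam ((T : ℤ), (hfun (i : ℕ) s T : ℤ))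
        (((T : ℤ) + 1, (hfun (i : ℕ) s (T + 1) : ℤ)))
        = if T = 0 then y
          else if lamE lam ((j : ℕ) + 2) < T then x ^ (T - lamE lam ((j : ℕ) + 2)) else 1 := by
      rw [twistW_mk, if_pos (by rw [hstepT]; push_cast; ring)]
      have harg : ((hfun (i : ℕ) s (T + 1) : ℤ)).toNat + 1 = (j : ℕ) + 2 := by
        rw [Int.toNat_natCast, hhT1]
      rw [harg]
      by_cases hT0 : T = 0
      · rw [if_pos (by exact_mod_cast hT0), if_pos hT0]
      · rw [if_neg (by exact_mod_cast hT0), if_neg hT0]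
        by_cases hbig : lamE lam ((j : ℕ) + 2) < T
        · rw [if_pos (by exact_mod_cast hbig), if_pos hbig]
          congr 1
          omega
        · rw [if_neg (by exact_mod_cast hbig), if_neg hbig]
    rw [hTw, W, dif_pos hsne, ← hT]
    rcases Nat.eq_zero_or_pos T with hT0 | hT1
    · have hs0 : 0 ∈ s := hT0 ▸ hTmem
      have hnotin : 0 ∉ s.erase T := by rw [hT0]; simp
      rw [if_pos hT0, if_neg hnotin, if_pos hs0, if_neg (show ¬ lamE lam ((j : ℕ) + 2) < T by omega)]
    · rw [if_neg (by omega), mul_comm]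
      congr 1
      have hmem_iff : 0 ∈ s.erase T ↔ 0 ∈ s := by
        rw [Finset.mem_erase]
        exact ⟨fun h => h.2, fun h => ⟨by omega, h⟩⟩
      by_cases h0 : 0 ∈ s
      · rw [if_pos (hmem_iff.mpr h0), if_pos h0]
      · rw [if_neg (fun hh => h0 (hmem_iff.mp hh)), if_neg h0]

end Stmt11Aux
namespace Stmt11Aux
open Finset
variable {R : Type} [CommRing R]

lemma cnt (y : R) (m c : ℕ) :
    ∑ s ∈ Finset.powersetCard c (Finset.range (m + 1)), (if 0 ∈ s then y else 1)
      = (m.choose c : R) + y * (if c = 0 then 0 else (m.choose (c - 1) : R)) := by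
  cases c with
  | zero => simp
  | succ c =>
    have h0B : (0 : ℕ) ∉ (Finset.range (m + 1)).erase 0 := Finset.notMem_erase _ _
    have hins : insert 0 ((Finset.range (m + 1)).erase 0) = Finset.range (m + 1) :=
      Finset.insert_erase (by simp)
    have hcard : ((Finset.range (m + 1)).erase 0).card = m := by
      rw [Finset.card_erase_of_mem (by simp), Finset.card_range]
      omega
    have hdisj : Disjoint (Finset.powersetCard (c + 1) ((Finset.range (m + 1)).erase 0))
        ((Finset.powersetCard c ((Finset.range (m + 1)).erase 0)).image (insert 0)) := by
      rw [Finset.disjoint_left]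
      intro s hs1 hs2
      obtain ⟨u, _, rfl⟩ := Finset.mem_image.mp hs2
      have hsub := (Finset.mem_powersetCard.mp hs1).1
      exact h0B (hsub (Finset.mem_insert_self 0 u))
    have hinj : ∀ u ∈ Finset.powersetCard c ((Finset.range (m + 1)).erase 0),
        ∀ v ∈ Finset.powersetCard c ((Finset.range (m + 1)).erase 0),
        insert 0 u = insert 0 v → u = v := by
      intro u hu v hv huv
      have h1 : (0 : ℕ) ∉ u := fun h => h0B ((Finset.mem_powersetCard.mp hu).1 h)
      have h2 : (0 : ℕ) ∉ v := fun h => h0B ((Finset.mem_powersetCard.mp hv).1 h)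
      rw [← Finset.erase_insert h1, ← Finset.erase_insert h2, huv]
    rw [← hins, Finset.powersetCard_succ_insert h0B, Finset.sum_union hdisj,
      Finset.sum_image hinj]
    have e1 : ∑ s ∈ Finset.powersetCard (c + 1) ((Finset.range (m + 1)).erase 0),
        (if 0 ∈ s then y else 1) = (m.choose (c + 1) : R) := by
      rw [Finset.sum_congr rfl (fun s hs => if_neg
        (fun h => h0B ((Finset.mem_powersetCard.mp hs).1 h)))]
      rw [Finset.sum_const, Finset.card_powersetCard, hcard, nsmul_eq_mul, mul_one]
    have e2 : ∑ s ∈ Finset.powersetCard c ((Finset.range (m + 1)).erase 0),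
        (if 0 ∈ insert 0 s then y else 1) = y * (m.choose c : R) := by
      rw [Finset.sum_congr rfl (fun s _ => if_pos (Finset.mem_insert_self 0 s))]
      rw [Finset.sum_const, Finset.card_powersetCard, hcard, nsmul_eq_mul, mul_comm]
    rw [e1, e2]
    simp

lemma sum_W (x y : R) (μ d : ℕ) (M : ℕ) (hM : μ ≤ M) :
    ∑ s ∈ Finset.powersetCard (d + 1) (Finset.range (M + 1)), W x y μ s
      = (μ.choose (d + 1) : R) + y * (μ.choose d : R)
        + ∑ p ∈ Finset.Icc 1 (M - μ), x ^ p *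
            (((μ + p - 1).choose d : R) +
              y * (if d = 0 then 0 else ((μ + p - 1).choose (d - 1) : R))) := by
  induction M, hM using Nat.le_induction with
  | base =>
    have heq : ∀ s ∈ Finset.powersetCard (d + 1) (Finset.range (μ + 1)),
        W x y μ s = (if 0 ∈ s then y else 1) := by
      intro s hs
      obtain ⟨hsub, hc⟩ := Finset.mem_powersetCard.mp hs
      have hne : s.Nonempty := Finset.card_pos.mp (by omega)
      have hmax : s.max' hne ≤ μ := by
        have := Finset.mem_range.mp (hsub (s.max'_mem hne))
        omega
      rw [W, dif_pos hne, if_neg (show ¬ μ < s.max' hne by omega), mul_one]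
    rw [Finset.sum_congr rfl heq, cnt, Nat.sub_self]
    simp
  | succ M hμM ih =>
    have hnm : M + 1 ∉ Finset.range (M + 1) := by simp
    have hdisj : Disjoint (Finset.powersetCard (d + 1) (Finset.range (M + 1)))
        ((Finset.powersetCard d (Finset.range (M + 1))).image (insert (M + 1))) := by
      rw [Finset.disjoint_left]
      intro s hs1 hs2
      obtain ⟨u, _, rfl⟩ := Finset.mem_image.mp hs2
      have hsub := (Finset.mem_powersetCard.mp hs1).1
      exact hnm (hsub (Finset.mem_insert_self _ u))
    have hinj : ∀ u ∈ Finset.powersetCard d (Finset.range (M + 1)),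
        ∀ v ∈ Finset.powersetCard d (Finset.range (M + 1)),
        insert (M + 1) u = insert (M + 1) v → u = v := by
      intro u hu v hv huv
      have h1 : M + 1 ∉ u := fun h => hnm ((Finset.mem_powersetCard.mp hu).1 h)
      have h2 : M + 1 ∉ v := fun h => hnm ((Finset.mem_powersetCard.mp hv).1 h)
      rw [← Finset.erase_insert h1, ← Finset.erase_insert h2, huv]
    have hrange : Finset.range (M + 2) = insert (M + 1) (Finset.range (M + 1)) :=
      Finset.range_add_one
    rw [hrange, Finset.powersetCard_succ_insert hnm, Finset.sum_union hdisj, ih,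
      Finset.sum_image hinj]
    have hW : ∀ s ∈ Finset.powersetCard d (Finset.range (M + 1)),
        W x y μ (insert (M + 1) s) = x ^ (M + 1 - μ) * (if 0 ∈ s then y else 1) := by
      intro s hs
      obtain ⟨hsub, hc⟩ := Finset.mem_powersetCard.mp hs
      have hne : (insert (M + 1) s).Nonempty := Finset.insert_nonempty _ _
      have hmax : (insert (M + 1) s).max' hne = M + 1 := by
        apply le_antisymm
        · apply Finset.max'_le
          intro u hu
          rcases Finset.mem_insert.mp hu with rfl | hu
          · exact le_rfl
          · have := Finset.mem_range.mp (hsub hu); omega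
        · exact Finset.le_max' _ _ (Finset.mem_insert_self _ _)
      have h0 : (0 ∈ insert (M + 1) s) ↔ 0 ∈ s := by
        rw [Finset.mem_insert]
        constructor
        · rintro (h | h)
          · omega
          · exact h
        · exact fun h => Or.inr h
      rw [W, dif_pos hne, hmax, if_pos (show μ < M + 1 by omega), mul_comm]
      congr 1
      by_cases hh : 0 ∈ s
      · rw [if_pos (h0.mpr hh), if_pos hh]
      · rw [if_neg (fun hc' => hh (h0.mp hc')), if_neg hh]
    rw [Finset.sum_congr rfl hW, ← Finset.mul_sum, cnt]
    have hIcc : Finset.Icc 1 (M + 1 - μ) = insert (M + 1 - μ) (Finset.Icc 1 (M - μ)) := by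
      ext u
      simp only [Finset.mem_Icc, Finset.mem_insert]
      omega
    rw [hIcc, Finset.sum_insert (by simp only [Finset.mem_Icc]; omega)]
    have hsimp : μ + (M + 1 - μ) - 1 = M := by omega
    rw [hsimp]
    ring

end Stmt11Aux
namespace Stmt11Aux
open Finset

lemma chooseZ_natCast (a c : ℕ) : chooseZ a ((c : ℤ)) = a.choose c := by
  rw [chooseZ, if_pos (by omega), Int.toNat_natCast]

lemma chooseZ_neg' (a : ℕ) {b : ℤ} (hb : b < 0) : chooseZ a b = 0 := by
  rw [chooseZ, if_neg (by omega)]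

lemma chooseZ_zero (a : ℕ) : chooseZ a 0 = 1 := by
  rw [chooseZ, if_pos le_rfl]
  simp

end Stmt11Aux

open Stmt11Aux

/-- **The path-weight sums of the twisted-diagram digraph** (the entries of the
LGV matrix): `w_{ij} = C(λ_{j+1}, j-i+1) + y C(λ_{j+1}, j-i)
  + Σ_{p=1}^{λ_j-λ_{j+1}} x^p (C(λ_{j+1}+p-1, j-i) + y C(λ_{j+1}+p-1, j-i-1))`;
in particular `w_{ij} = 1` when `i = j+1` and `w_{ij} = 0` when `i > j+1`
(1-based indices; below `i j : Fin k` are 0-based). -/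
theorem stmt11 (R : Type) [CommRing R] (x y : R) (k : ℕ) (lam : Fin k → ℕ)
    (hlam : ∀ i j : Fin k, i ≤ j → lam j ≤ lam i) (hpos : ∀ i, 0 < lam i) (i j : Fin k) :
    (twistSum x y lam i j
      = ((chooseZ (lamE lam ((j : ℕ) + 2)) (((j : ℕ) : ℤ) - ((i : ℕ) : ℤ) + 1) : ℕ) : R)
        + y * ((chooseZ (lamE lam ((j : ℕ) + 2)) (((j : ℕ) : ℤ) - ((i : ℕ) : ℤ)) : ℕ) : R)
        + ∑ p ∈ Finset.Icc 1 (lamE lam ((j : ℕ) + 1) - lamE lam ((j : ℕ) + 2)),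
            x ^ p *
              (((chooseZ (lamE lam ((j : ℕ) + 2) + p - 1)
                  (((j : ℕ) : ℤ) - ((i : ℕ) : ℤ)) : ℕ) : R)
                + y * ((chooseZ (lamE lam ((j : ℕ) + 2) + p - 1)
                    (((j : ℕ) : ℤ) - ((i : ℕ) : ℤ) - 1) : ℕ) : R)))
    ∧ ((i : ℕ) = (j : ℕ) + 1 → twistSum x y lam i j = 1)
    ∧ ((j : ℕ) + 1 < (i : ℕ) → twistSum x y lam i j = 0) := by
  classical
  have hk := j.isLt
  have hik := i.isLt
  have hjlam : lamE lam ((j : ℕ) + 1) = lam j := lamE_coe j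
  have hμle : lamE lam ((j : ℕ) + 2) ≤ lam j := by
    rw [← hjlam]
    exact lamE_anti hlam (by omega) (by omega)
  set μ := lamE lam ((j : ℕ) + 2) with hμ
  -- evaluation of the right-hand side in degenerate cases
  have hRHS1 : (i : ℕ) = (j : ℕ) + 1 →
      ((chooseZ μ (((j : ℕ) : ℤ) - ((i : ℕ) : ℤ) + 1) : ℕ) : R)
        + y * ((chooseZ μ (((j : ℕ) : ℤ) - ((i : ℕ) : ℤ)) : ℕ) : R)
        + ∑ p ∈ Finset.Icc 1 (lamE lam ((j : ℕ) + 1) - μ),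
            x ^ p * (((chooseZ (μ + p - 1) (((j : ℕ) : ℤ) - ((i : ℕ) : ℤ)) : ℕ) : R)
              + y * ((chooseZ (μ + p - 1) (((j : ℕ) : ℤ) - ((i : ℕ) : ℤ) - 1) : ℕ) : R)) = 1 := by
    intro hji
    have e0 : ((j : ℕ) : ℤ) - ((i : ℕ) : ℤ) + 1 = 0 := by omega
    have e1 : ∀ a : ℕ, chooseZ a (((j : ℕ) : ℤ) - ((i : ℕ) : ℤ)) = 0 :=
      fun a => chooseZ_neg' a (by omega)
    have e2 : ∀ a : ℕ, chooseZ a (((j : ℕ) : ℤ) - ((i : ℕ) : ℤ) - 1) = 0 :=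
      fun a => chooseZ_neg' a (by omega)
    simp only [e0, e1, e2, chooseZ_zero]
    simp
  have hRHS0 : (j : ℕ) + 1 < (i : ℕ) →
      ((chooseZ μ (((j : ℕ) : ℤ) - ((i : ℕ) : ℤ) + 1) : ℕ) : R)
        + y * ((chooseZ μ (((j : ℕ) : ℤ) - ((i : ℕ) : ℤ)) : ℕ) : R)
        + ∑ p ∈ Finset.Icc 1 (lamE lam ((j : ℕ) + 1) - μ),
            x ^ p * (((chooseZ (μ + p - 1) (((j : ℕ) : ℤ) - ((i : ℕ) : ℤ)) : ℕ) : R)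
              + y * ((chooseZ (μ + p - 1) (((j : ℕ) : ℤ) - ((i : ℕ) : ℤ) - 1) : ℕ) : R)) = 0 := by
    intro hji
    simp only [chooseZ_neg' _ (show ((j : ℕ) : ℤ) - ((i : ℕ) : ℤ) + 1 < 0 by omega),
      chooseZ_neg' _ (show ((j : ℕ) : ℤ) - ((i : ℕ) : ℤ) < 0 by omega),
      chooseZ_neg' _ (show ((j : ℕ) : ℤ) - ((i : ℕ) : ℤ) - 1 < 0 by omega)]
    simp
  -- the main formula
  have hmain : twistSum x y lam i j
      = ((chooseZ μ (((j : ℕ) : ℤ) - ((i : ℕ) : ℤ) + 1) : ℕ) : R)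
        + y * ((chooseZ μ (((j : ℕ) : ℤ) - ((i : ℕ) : ℤ)) : ℕ) : R)
        + ∑ p ∈ Finset.Icc 1 (lamE lam ((j : ℕ) + 1) - μ),
            x ^ p * (((chooseZ (μ + p - 1) (((j : ℕ) : ℤ) - ((i : ℕ) : ℤ)) : ℕ) : R)
              + y * ((chooseZ (μ + p - 1) (((j : ℕ) : ℤ) - ((i : ℕ) : ℤ) - 1) : ℕ) : R)) := by
    by_cases hij : (i : ℕ) ≤ (j : ℕ) + 1
    · -- there are paths
      set n := (j : ℕ) + 1 - (i : ℕ) with hn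
      have hSet : {p : List (ℤ × ℤ) | IsDiPath (twistE lam) ((0 : ℤ), ((i : ℕ) : ℤ))
            ((lam j : ℤ) + 1, ((j : ℕ) : ℤ) + 1) p}
          = ↑((Finset.powersetCard n (Finset.range (lam j + 1))).image
              (pOf (i : ℕ) (lam j + 2))) := by
        ext p
        simp only [Set.mem_setOf_eq, Finset.coe_image, Set.mem_image, Finset.mem_coe,
          Finset.mem_powersetCard]
        constructor
        · intro hp
          have hne := hp.1
          obtain ⟨s, hsub, hpeq, hc⟩ := recon hp
          have hl1 : 1 ≤ p.length := List.length_pos_iff.mpr hne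
          have hc1 := congrArg Prod.fst hc
          have hc2 := congrArg Prod.snd hc
          simp only at hc1 hc2
          have hlen : p.length = lam j + 2 := by omega
          have hcard : s.card = n := by omega
          rw [hlen] at hsub hpeq
          exact ⟨s, ⟨hsub, hcard⟩, hpeq.symm⟩
        · rintro ⟨s, ⟨hsub, hcard⟩, rfl⟩
          exact pOf_isDiPath hlam hpos hij hsub (by omega)
      have hinj : ∀ s ∈ Finset.powersetCard n (Finset.range (lam j + 1)),
          ∀ s' ∈ Finset.powersetCard n (Finset.range (lam j + 1)),
          pOf (i : ℕ) (lam j + 2) s = pOf (i : ℕ) (lam j + 2) s' → s = s' := by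
        intro s hs s' hs' h
        exact pOf_inj (Finset.mem_powersetCard.mp hs).1 (Finset.mem_powersetCard.mp hs').1
          (by omega) h
      rw [twistSum, hSet, finsum_mem_coe_finset, Finset.sum_image hinj]
      have hsum : ∑ s ∈ Finset.powersetCard n (Finset.range (lam j + 1)),
          pathWeight (twistW x y lam) (pOf (i : ℕ) (lam j + 2) s)
          = ∑ s ∈ Finset.powersetCard n (Finset.range (lam j + 1)), W x y μ s := by
        refine Finset.sum_congr rfl fun s hs => ?_
        obtain ⟨hsub, hcard⟩ := Finset.mem_powersetCard.mp hs
        exact weight_pOf hlam x y hij hsub (by omega)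
      rw [hsum, hjlam]
      by_cases hij2 : (i : ℕ) ≤ (j : ℕ)
      · -- at least one southeast step
        set d := (j : ℕ) - (i : ℕ) with hd
        have hnd : n = d + 1 := by omega
        have g1 : ((j : ℕ) : ℤ) - ((i : ℕ) : ℤ) + 1 = ((d + 1 : ℕ) : ℤ) := by push_cast; omega
        have g2 : ((j : ℕ) : ℤ) - ((i : ℕ) : ℤ) = ((d : ℕ) : ℤ) := by push_cast; omega
        rw [hnd, sum_W x y μ d (lam j) hμle]
        have e1 : ∀ a : ℕ, chooseZ a (((j : ℕ) : ℤ) - ((i : ℕ) : ℤ) + 1)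
            = a.choose (d + 1) := by
          intro a
          rw [show ((j : ℕ) : ℤ) - ((i : ℕ) : ℤ) + 1 = ((d + 1 : ℕ) : ℤ) by push_cast; omega,
            chooseZ_natCast]
        have e2 : ∀ a : ℕ, chooseZ a (((j : ℕ) : ℤ) - ((i : ℕ) : ℤ)) = a.choose d := by
          intro a
          rw [show ((j : ℕ) : ℤ) - ((i : ℕ) : ℤ) = ((d : ℕ) : ℤ) by push_cast; omega,
            chooseZ_natCast]
        by_cases hd0 : d = 0
        · have e3 : ∀ a : ℕ, chooseZ a (((j : ℕ) : ℤ) - ((i : ℕ) : ℤ) - 1) = 0 := by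
            intro a
            apply chooseZ_neg'
            omega
          simp only [e1, e2, e3, hd0, if_pos rfl]
          simp
        · have e3 : ∀ a : ℕ, chooseZ a (((j : ℕ) : ℤ) - ((i : ℕ) : ℤ) - 1)
              = a.choose (d - 1) := by
            intro a
            rw [show ((j : ℕ) : ℤ) - ((i : ℕ) : ℤ) - 1 = ((d - 1 : ℕ) : ℤ) by push_cast; omega,
              chooseZ_natCast]
          simp only [e1, e2, e3, if_neg hd0]
      · -- i = j + 1 : only the all-east path
        have hji : (i : ℕ) = (j : ℕ) + 1 := by omega
        have hn0 : n = 0 := by omega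
        rw [hn0, Finset.powersetCard_zero, Finset.sum_singleton, W,
          dif_neg (by simp), hjlam] at *
        rw [hRHS1 hji]
    · -- no paths
      push_neg at hij
      have hSet : {p : List (ℤ × ℤ) | IsDiPath (twistE lam) ((0 : ℤ), ((i : ℕ) : ℤ))
            ((lam j : ℤ) + 1, ((j : ℕ) : ℤ) + 1) p} = (∅ : Set (List (ℤ × ℤ))) := by
        ext p
        simp only [Set.mem_setOf_eq, Set.mem_empty_iff_false, iff_false]
        intro hp
        obtain ⟨s, hsub, hpeq, hc⟩ := recon hp
        have hc2 := congrArg Prod.snd hc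
        simp only at hc2
        omega
      rw [twistSum, hSet, finsum_mem_empty, hRHS0 hij]
  exact ⟨hmain, fun h => hmain.trans (hRHS1 h), fun h => hmain.trans (hRHS0 h)⟩
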